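/- Abstract version of the convergence argument: Let T be a compactly generated triangulated category with a set of compact generators G, and (S_n)_{n∈ℤ} with S_{n+1} ⊆ S_n ⊆ G determining localizing subcategories Loc(S_n) whose orthogonal inclusions have right adjoints, giving functors bc_{≤n}. Suppose for every generator g ∈ G there exists N(g) ∈ ℤ such that g ∈ Loc(S_{N(g)+1})^⊥. Then for every A ∈ T the canonical map c : hocolim_{n→∞} bc_{≤n}(A) → A is an isomorphism. -/

import Mathlib

open CategoryTheory Limits Pretriangulated ZeroObject

universe w v u

/-- Compactness: the canonical map `⊕ᵢ Hom(B, Xᵢ) → Hom(B, ∐ᵢ Xᵢ)` is bijective. -/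
def IsCompactObj {C : Type u} [Category.{v} C] [Preadditive C] (B : C) : Prop :=
  ∀ (ι : Type w) (X : ι → C) [HasCoproduct X],
    (∀ u : B ⟶ ∐ X, ∃ (s : Finset ι) (v : ∀ i, B ⟶ X i),
        u = ∑ i ∈ s, v i ≫ Sigma.ι X i) ∧
    (∀ (s : Finset ι) (v : ∀ i, B ⟶ X i),
        (∑ i ∈ s, v i ≫ Sigma.ι X i) = 0 → ∀ i ∈ s, v i = 0)

variable {C : Type u} [Category.{v} C]

/-- Composition with the counit of the adjunction `incl ⊣ p` is bijective on
morphisms out of an object of the subcategory. -/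
lemma counit_bijective {Z : C → Prop} {p : C ⥤ ObjectProperty.FullSubcategory Z}
    (adj : ObjectProperty.ι Z ⊣ p) {B : C} (hB : Z B) (A : C) :
    Function.Bijective
      (fun φ : B ⟶ (ObjectProperty.ι Z).obj (p.obj A) => φ ≫ adj.counit.app A) := by
  have : (fun φ : B ⟶ (ObjectProperty.ι Z).obj (p.obj A) => φ ≫ adj.counit.app A)
      = fun φ => (adj.homEquiv ⟨B, hB⟩ A).symm
          ((ObjectProperty.fullyFaithfulι Z).homEquiv.symm φ) := by
    funext φ
    rw [Adjunction.homEquiv_counit]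
    rfl
  rw [this]
  exact (adj.homEquiv ⟨B, hB⟩ A).symm.bijective.comp
    (ObjectProperty.fullyFaithfulι Z).homEquiv.symm.bijective

/-- Shifts of compact objects are compact. -/
lemma isCompactObj_shift [Preadditive C] [HasShift C ℤ]
    [∀ n : ℤ, (shiftFunctor C n).Additive] [HasCoproducts.{0} C]
    {B : C} (hB : IsCompactObj.{0} B) (i : ℤ) : IsCompactObj.{0} (B⟦i⟧) := by
  intro ι X _
  haveI : HasColimitsOfShape (Discrete ι) C := ‹HasCoproducts.{0} C› ι
  set F := shiftFunctor C (-i) with hF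
  set η : B ⟶ B⟦i⟧⟦-i⟧ := (shiftFunctorCompIsoId C i (-i) (add_neg_cancel i)).inv.app B with hη
  have ηiso : IsIso η := inferInstance
  have Φinj : ∀ {Y : C} (φ₁ φ₂ : B⟦i⟧ ⟶ Y), η ≫ F.map φ₁ = η ≫ F.map φ₂ → φ₁ = φ₂ := by
    intro Y φ₁ φ₂ hφ
    apply F.map_injective
    rwa [cancel_epi η] at hφ
  have Φsurj : ∀ {Y : C} (ψ : B ⟶ F.obj Y), ∃ φ : B⟦i⟧ ⟶ Y, η ≫ F.map φ = ψ := by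
    intro Y ψ
    obtain ⟨χ, hχ⟩ := F.map_surjective (inv η ≫ ψ)
    exact ⟨χ, by rw [hχ, IsIso.hom_inv_id_assoc]⟩
  set cmp := sigmaComparison F X with hcmp
  haveI : IsIso cmp := inferInstance
  obtain ⟨hBdec, hBinj⟩ := hB ι (fun k => F.obj (X k))
  constructor
  · intro u
    obtain ⟨s, v', hv'⟩ := hBdec ((η ≫ F.map u) ≫ inv cmp)
    have hv : ∀ k, ∃ vk : B⟦i⟧ ⟶ X k, η ≫ F.map vk = v' k := fun k => Φsurj (v' k)
    choose v hv using hv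
    refine ⟨s, v, Φinj _ _ ?_⟩
    have heq : η ≫ F.map u = (((η ≫ F.map u) ≫ inv cmp) ≫ cmp) := by simp
    rw [heq, hv']
    rw [Functor.map_sum, Preadditive.comp_sum, Preadditive.sum_comp]
    apply Finset.sum_congr rfl
    intro k _
    rw [Functor.map_comp, ← Category.assoc, hv, Category.assoc,
      ι_comp_sigmaComparison]
  · intro s v hsum k hk
    have h0 : η ≫ F.map (∑ j ∈ s, v j ≫ Sigma.ι X j) = η ≫ F.map (0 : B⟦i⟧ ⟶ ∐ X) := by
      rw [hsum]
    rw [Functor.map_zero, comp_zero, Functor.map_sum, Preadditive.comp_sum] at h0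
    have h1 : ∑ j ∈ s, ((η ≫ F.map (v j)) ≫ Sigma.ι (fun k => F.obj (X k)) j) ≫ cmp = 0 := by
      rw [← h0]
      apply Finset.sum_congr rfl
      intro j _
      rw [Category.assoc, Category.assoc, ι_comp_sigmaComparison, Functor.map_comp]
    rw [← Preadditive.sum_comp] at h1
    have h2 : (∑ j ∈ s, (η ≫ F.map (v j)) ≫ Sigma.ι (fun k => F.obj (X k)) j) = 0 := by
      rwa [← cancel_mono cmp, zero_comp]
    have := hBinj s (fun j => η ≫ F.map (v j)) h2 k hk
    apply Φinj
    rw [this, Functor.map_zero, comp_zero]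

/-- The functor `bc_{≤n} = j_{n+1} ∘ p_{n+1}` of the orthogonal tower, on objects. -/
def bcObj (orth : ℤ → C → Prop) (p : ∀ n : ℤ, C ⥤ ObjectProperty.FullSubcategory (orth n))
    (n : ℤ) (A : C) : C :=
  (ObjectProperty.ι (orth (n + 1))).obj ((p (n + 1)).obj A)

/-- The `ℕ`-indexed tower `k ↦ bc_{≤ r+k} A`. -/
def towerObj (orth : ℤ → C → Prop) (p : ∀ n : ℤ, C ⥤ ObjectProperty.FullSubcategory (orth n))
    (r : ℤ) (A : C) (k : ℕ) : C :=
  bcObj orth p (r + k) A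

/-- The transition maps of the `ℕ`-indexed tower `k ↦ bc_{≤ r+k} A`. -/
def towerMap (orth : ℤ → C → Prop) (p : ∀ n : ℤ, C ⥤ ObjectProperty.FullSubcategory (orth n))
    (r : ℤ) (A : C)
    (t : ∀ n : ℤ, bcObj orth p n A ⟶ bcObj orth p (n + 1) A) (k : ℕ) :
    towerObj orth p r A k ⟶ towerObj orth p r A (k + 1) :=
  t (r + k) ≫ eqToHom (congrArg (fun m : ℤ => bcObj orth p m A) (by push_cast; ring))

/-- abstract version of the convergence argument: Let `T` be a compactly
generated triangulated category with a set `G` of compact generators, and `(Sₙ)_{n∈ℤ}`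
with `Sₙ₊₁ ⊆ Sₙ ⊆ G` determining localizing subcategories `Loc(Sₙ)` whose orthogonal
inclusions have right adjoints, giving functors `bc_{≤n}`.  (The right orthogonal of
`Loc(Sₙ)` is characterized on the generators: `E ∈ Loc(Sₙ)^⊥` iff all maps `K⟦i⟧ ⟶ E`
with `K ∈ Sₙ` vanish.)  Suppose that for every generator `g ∈ G` there is `N(g) ∈ ℤ`
with `g ∈ Loc(S_{N(g)+1})^⊥`.  Then for every `A ∈ T` the canonical map
`c : hocolim_{n→∞} bc_{≤n}(A) → A` is an isomorphism. -/
theorem hocolim_bc_isIso_abstract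
    [Preadditive C] [HasZeroObject C] [HasShift C ℤ]
    [∀ n : ℤ, (shiftFunctor C n).Additive] [Pretriangulated C] [HasCoproducts.{0} C]
    (G : Set C)
    -- the generators are compact ...
    (hcpt : ∀ gK ∈ G, IsCompactObj.{0} gK)
    -- ... and jointly detect zero objects
    (hgen : ∀ W : C, (∀ K ∈ G, ∀ i : ℤ, ∀ f : K⟦i⟧ ⟶ W, f = 0) → IsZero W)
    (S : ℤ → Set C)
    (hSG : ∀ n : ℤ, S n ⊆ G)
    (hS : ∀ n : ℤ, S (n + 1) ⊆ S n)
    -- `orth n` is the right orthogonal `Loc(Sₙ)^⊥`, characterized on the generators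
    (orth : ℤ → C → Prop)
    (horth : ∀ n : ℤ, orth n = fun E => ∀ K ∈ S n, ∀ i : ℤ, ∀ f : K⟦i⟧ ⟶ E, f = 0)
    -- the right adjoints of the inclusions `Loc(Sₙ)^⊥ → T`
    (p : ∀ n : ℤ, C ⥤ ObjectProperty.FullSubcategory (orth n))
    (adj : ∀ n : ℤ, ObjectProperty.ι (orth n) ⊣ p n)
    -- every generator is orthogonal at some finite level
    (hN : ∀ gK ∈ G, ∃ N : ℤ, orth (N + 1) gK)
    (A : C) (r : ℤ)
    -- the maps `bc_{≤n} A ⟶ bc_{≤n+1} A` of the orthogonal tower, compatible with counits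
    (t : ∀ n : ℤ, bcObj orth p n A ⟶ bcObj orth p (n + 1) A)
    (ht : ∀ n : ℤ, t n ≫ (adj (n + 1 + 1)).counit.app A = (adj (n + 1)).counit.app A)
    -- the homotopy colimit of the tower, via the distinguished triangle on `1 - shift`
    (H : C) (g : (∐ towerObj orth p r A) ⟶ H) (h : H ⟶ (∐ towerObj orth p r A)⟦(1 : ℤ)⟧)
    (hH : Triangle.mk (Sigma.desc fun k => Sigma.ι (towerObj orth p r A) k -
        towerMap orth p r A t k ≫ Sigma.ι (towerObj orth p r A) (k + 1)) g h
      ∈ distTriang C)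
    -- the canonical map `c : hocolim bc_{≤n} A ⟶ A` induced by the counits
    (c : H ⟶ A)
    (hc : ∀ k : ℕ, Sigma.ι (towerObj orth p r A) k ≫ g ≫ c =
      (adj (r + k + 1)).counit.app A) :
    IsIso c := by
    classical
  -- monotonicity of the orthogonals
  have mono : ∀ (n : ℤ) (E : C), orth n E → orth (n + 1) E := by
    intro n E hE
    rw [horth] at hE ⊢
    intro K hK i f
    exact hE K (hS n hK) i f
  have oup : ∀ (E : C) (N n : ℤ), N ≤ n → orth (N + 1) E → orth (n + 1) E := by
    intro E N n hn hN'
    exact Int.le_induction (motive := fun n _ => orth (n + 1) E) hN'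
      (fun k _ hk => mono _ _ hk) n hn
  -- the orthogonals are closed under shifts
  have oShift : ∀ (n : ℤ) (E : C) (i : ℤ), orth n E → orth n (E⟦i⟧) := by
    intro n E i hE
    rw [horth] at hE ⊢
    intro K hK j f
    have h0 : ((shiftFunctorAdd' C j (-i) (j + -i) rfl).app K).hom ≫
        (shiftFunctor C (-i)).map f ≫
        (shiftFunctorCompIsoId C i (-i) (add_neg_cancel i)).hom.app E = 0 :=
      hE K hK (j + -i) _
    have h4 : (shiftFunctor C (-i)).map f = 0 := by
      rw [← cancel_epi ((shiftFunctorAdd' C j (-i) (j + -i) rfl).app K).hom,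
        ← cancel_mono ((shiftFunctorCompIsoId C i (-i) (add_neg_cancel i)).hom.app E)]
      simpa using h0
    apply (shiftFunctor C (-i)).map_injective
    rw [h4, Functor.map_zero]
  -- transfer a vanishing statement through a one-step shift
  have shiftdown : ∀ {Y Y' : C} (q : Y ⟶ Y'),
      (∀ K ∈ G, ∀ i : ℤ, ∀ ψ : K⟦i⟧ ⟶ Y, ψ ≫ q = 0 → ψ = 0) →
      ∀ K ∈ G, ∀ i : ℤ, ∀ φ : K⟦i⟧ ⟶ Y⟦(1 : ℤ)⟧, φ ≫ q⟦(1 : ℤ)⟧' = 0 → φ = 0 := by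
    intro Y Y' q hq K hK i φ hφ
    have h1 : (shiftFunctor C (-1 : ℤ)).map φ ≫
        (shiftFunctorCompIsoId C (1 : ℤ) (-1) (add_neg_cancel 1)).hom.app Y ≫ q = 0 := by
      have h0 : (shiftFunctor C (-1 : ℤ)).map (φ ≫ q⟦(1 : ℤ)⟧') = 0 := by
        rw [hφ, Functor.map_zero]
      rw [Functor.map_comp, shift_shift_neg'] at h0
      rw [← cancel_mono ((shiftFunctorCompIsoId C (1 : ℤ) (-1) (add_neg_cancel 1)).inv.app Y')]
      simpa using h0
    have h2 : (((shiftFunctorAdd' C i (-1) (i + -1) rfl).app K).hom ≫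
        (shiftFunctor C (-1 : ℤ)).map φ ≫
        (shiftFunctorCompIsoId C (1 : ℤ) (-1) (add_neg_cancel 1)).hom.app Y) ≫ q = 0 := by
      rw [Category.assoc, Category.assoc, h1, comp_zero]
    have h3 := hq K hK (i + -1) _ h2
    have h4 : (shiftFunctor C (-1 : ℤ)).map φ = 0 := by
      rw [← cancel_epi (((shiftFunctorAdd' C i (-1) (i + -1) rfl).app K).hom),
        ← cancel_mono ((shiftFunctorCompIsoId C (1 : ℤ) (-1) (add_neg_cancel 1)).hom.app Y)]
      simpa using h3
    exact (shiftFunctor C (-1 : ℤ)).map_injective (by rw [h4, Functor.map_zero])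
  have hdg : (Sigma.desc fun k => Sigma.ι (towerObj orth p r A) k -
      towerMap orth p r A t k ≫ Sigma.ι (towerObj orth p r A) (k + 1)) ≫ g = 0 :=
    comp_distTriang_mor_zero₁₂ _ hH
  have hstep : ∀ k : ℕ, Sigma.ι (towerObj orth p r A) k ≫ g =
      towerMap orth p r A t k ≫ Sigma.ι (towerObj orth p r A) (k + 1) ≫ g := by
    intro k
    have h0 : (Sigma.ι (towerObj orth p r A) k ≫ Sigma.desc fun k =>
        Sigma.ι (towerObj orth p r A) k -
          towerMap orth p r A t k ≫ Sigma.ι (towerObj orth p r A) (k + 1)) ≫ g = 0 := by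
      rw [Category.assoc, hdg, comp_zero]
    rw [Sigma.ι_desc, Preadditive.sub_comp, sub_eq_zero] at h0
    rw [h0, Category.assoc]
  -- injectivity of composition with the telescope map on generators
  have dinj : ∀ K ∈ G, ∀ i : ℤ, ∀ u : K⟦i⟧ ⟶ ∐ towerObj orth p r A,
      u ≫ (Sigma.desc fun k => Sigma.ι (towerObj orth p r A) k -
        towerMap orth p r A t k ≫ Sigma.ι (towerObj orth p r A) (k + 1)) = 0 → u = 0 := by
    intro K hK i u hu
    obtain ⟨dec, inj⟩ := isCompactObj_shift (hcpt K hK) i ℕ (towerObj orth p r A)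
    obtain ⟨s, v, huv⟩ := dec u
    set m := s.sup id + 1 with hm
    set V : ∀ k : ℕ, K⟦i⟧ ⟶ towerObj orth p r A k :=
      fun k => if k ∈ s then v k else 0 with hV
    have hVm : ∀ j, m ≤ j → V j = 0 := by
      intro j hj
      simp only [hV]
      rw [if_neg]
      intro hjs
      have h5 := Finset.le_sup (f := id) hjs
      simp only [id] at h5
      omega
    have hu' : u = ∑ k ∈ Finset.range m, V k ≫ Sigma.ι (towerObj orth p r A) k := by
      rw [huv, show (∑ k ∈ s, v k ≫ Sigma.ι (towerObj orth p r A) k)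
          = ∑ k ∈ s, V k ≫ Sigma.ι (towerObj orth p r A) k from
        Finset.sum_congr rfl fun k hk => by simp only [hV]; rw [if_pos hk]]
      refine Finset.sum_subset (fun k hk => Finset.mem_range.2 ?_)
        (fun k _ hk => by simp only [hV]; rw [if_neg hk, zero_comp])
      have h5 := Finset.le_sup (f := id) hk
      simp only [id] at h5
      omega
    set W : ∀ j : ℕ, K⟦i⟧ ⟶ towerObj orth p r A j := fun j =>
      Nat.rec 0 (fun k _ => V k ≫ towerMap orth p r A t k) j with hW
    have hW0 : W 0 = 0 := rfl
    have hWs : ∀ k, W (k + 1) = V k ≫ towerMap orth p r A t k := fun k => rfl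
    have key : ∑ j ∈ Finset.range (m + 1),
        (V j - W j) ≫ Sigma.ι (towerObj orth p r A) j = 0 := by
      have e1 : ∑ j ∈ Finset.range (m + 1), (V j - W j) ≫ Sigma.ι (towerObj orth p r A) j
          = (∑ j ∈ Finset.range (m + 1), V j ≫ Sigma.ι (towerObj orth p r A) j)
            - ∑ j ∈ Finset.range (m + 1), W j ≫ Sigma.ι (towerObj orth p r A) j := by
        rw [← Finset.sum_sub_distrib]
        exact Finset.sum_congr rfl fun j _ => by rw [Preadditive.sub_comp]
      have e2 : ∑ j ∈ Finset.range (m + 1), V j ≫ Sigma.ι (towerObj orth p r A) j = u := by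
        rw [Finset.sum_range_succ, hVm m le_rfl, zero_comp, add_zero, ← hu']
      have e3 : ∑ j ∈ Finset.range (m + 1), W j ≫ Sigma.ι (towerObj orth p r A) j
          = ∑ k ∈ Finset.range m,
              (V k ≫ towerMap orth p r A t k) ≫ Sigma.ι (towerObj orth p r A) (k + 1) := by
        rw [Finset.sum_range_succ', hW0, zero_comp, add_zero]
      have e4 : u ≫ (Sigma.desc fun k => Sigma.ι (towerObj orth p r A) k -
          towerMap orth p r A t k ≫ Sigma.ι (towerObj orth p r A) (k + 1))
          = (∑ k ∈ Finset.range m, V k ≫ Sigma.ι (towerObj orth p r A) k)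
            - ∑ k ∈ Finset.range m,
                (V k ≫ towerMap orth p r A t k) ≫ Sigma.ι (towerObj orth p r A) (k + 1) := by
        rw [hu', Preadditive.sum_comp, ← Finset.sum_sub_distrib]
        refine Finset.sum_congr rfl fun k _ => ?_
        rw [Category.assoc, Sigma.ι_desc, Preadditive.comp_sub, ← Category.assoc]
      rw [e1, e2, e3]
      rw [← hu'] at e4
      rw [← e4, hu]
    have hVW := inj (Finset.range (m + 1)) (fun j => V j - W j) key
    have hVzero : ∀ j, V j = 0 := by
      intro j
      induction j with
      | zero =>
        have h5 : V 0 - W 0 = 0 := hVW 0 (Finset.mem_range.2 (by omega))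
        rw [sub_eq_zero] at h5
        rw [h5, hW0]
      | succ k ih =>
        by_cases hj : k + 1 < m + 1
        · have h5 : V (k + 1) - W (k + 1) = 0 := hVW (k + 1) (Finset.mem_range.2 hj)
          rw [sub_eq_zero] at h5
          rw [h5, hWs, ih, zero_comp]
        · exact hVm _ (by omega)
    rw [hu']
    exact Finset.sum_eq_zero fun k _ => by rw [hVzero, zero_comp]
  -- surjectivity of `Hom(K⟦i⟧, H) → Hom(K⟦i⟧, A)`
  have keyA : ∀ K ∈ G, ∀ i : ℤ, ∀ a : K⟦i⟧ ⟶ A, ∃ x : K⟦i⟧ ⟶ H, x ≫ c = a := by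
    intro K hK i a
    obtain ⟨N, hNK⟩ := hN K hK
    set k := (N - r).toNat with hk
    have horthB : orth (r + (k : ℤ) + 1) (K⟦i⟧) :=
      oShift _ _ i (oup K N (r + (k : ℤ)) (by omega) hNK)
    obtain ⟨b, hb⟩ := (counit_bijective (adj (r + (k : ℤ) + 1)) horthB A).surjective a
    refine ⟨(b ≫ Sigma.ι (towerObj orth p r A) k) ≫ g, ?_⟩
    rw [Category.assoc]
    exact (Category.assoc b _ _).trans
      ((congrArg (fun z : towerObj orth p r A k ⟶ A => b ≫ z) (hc k)).trans hb)
  -- injectivity of `Hom(K⟦i⟧, H) → Hom(K⟦i⟧, A)`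
  have keyB : ∀ K ∈ G, ∀ i : ℤ, ∀ x : K⟦i⟧ ⟶ H, x ≫ c = 0 → x = 0 := by
    intro K hK i x hxc
    have h1 : x ≫ h = 0 := by
      apply shiftdown _ dinj K hK i
      have h0 : h ≫ (Sigma.desc fun k => Sigma.ι (towerObj orth p r A) k -
          towerMap orth p r A t k ≫ Sigma.ι (towerObj orth p r A) (k + 1))⟦(1 : ℤ)⟧' = 0 :=
        comp_distTriang_mor_zero₃₁ _ hH
      rw [Category.assoc, h0, comp_zero]
    obtain ⟨u, hxg0⟩ := Triangle.coyoneda_exact₃ _ hH x h1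
    have hxg : x = u ≫ g := hxg0
    obtain ⟨N, hNK⟩ := hN K hK
    obtain ⟨dec, inj⟩ := isCompactObj_shift (hcpt K hK) i ℕ (towerObj orth p r A)
    obtain ⟨s, v, huv⟩ := dec u
    set m := max (s.sup id) (N - r).toNat with hm
    set V : ∀ k : ℕ, K⟦i⟧ ⟶ towerObj orth p r A k :=
      fun k => if k ∈ s then v k else 0 with hV
    have hu' : u = ∑ k ∈ Finset.range (m + 1), V k ≫ Sigma.ι (towerObj orth p r A) k := by
      rw [huv, show (∑ k ∈ s, v k ≫ Sigma.ι (towerObj orth p r A) k)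
          = ∑ k ∈ s, V k ≫ Sigma.ι (towerObj orth p r A) k from
        Finset.sum_congr rfl fun k hk => by simp only [hV]; rw [if_pos hk]]
      refine Finset.sum_subset (fun k hk => Finset.mem_range.2 ?_)
        (fun k _ hk => by simp only [hV]; rw [if_neg hk]; exact zero_comp)
      have h5 := Finset.le_sup (f := id) hk
      simp only [id] at h5
      omega
    have horthB : orth (r + (m : ℤ) + 1) (K⟦i⟧) :=
      oShift _ _ i (oup K N (r + (m : ℤ)) (by
        have h6 : (N - r).toNat ≤ m := le_max_right _ _
        omega) hNK)
    set tot : ∀ k : ℕ, K⟦i⟧ ⟶ towerObj orth p r A k := fun k =>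
      Nat.rec (V 0) (fun k acc => acc ≫ towerMap orth p r A t k + V (k + 1)) k with htotdef
    have htot0 : tot 0 = V 0 := rfl
    have htots : ∀ k, tot (k + 1) = tot k ≫ towerMap orth p r A t k + V (k + 1) :=
      fun k => rfl
    have htel : ∀ k : ℕ, (∑ j ∈ Finset.range (k + 1),
        V j ≫ Sigma.ι (towerObj orth p r A) j) ≫ g
        = tot k ≫ Sigma.ι (towerObj orth p r A) k ≫ g := by
      intro k
      induction k with
      | zero => rw [Finset.sum_range_one, htot0, Category.assoc]
      | succ k ih =>
        rw [Finset.sum_range_succ, Preadditive.add_comp, ih, htots, Preadditive.add_comp,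
          hstep k]
        simp only [Category.assoc]
    have hug : u ≫ g = tot m ≫ Sigma.ι (towerObj orth p r A) m ≫ g := by
      rw [hu']
      exact htel m
    have hcomp : tot m ≫ (adj (r + (m : ℤ) + 1)).counit.app A = 0 := by
      have h7 : (u ≫ g) ≫ c = 0 := by rw [← hxg]; exact hxc
      rw [hug] at h7
      rw [← hc m]
      simpa [Category.assoc] using h7
    have htotz : tot m = 0 :=
      (counit_bijective (adj (r + (m : ℤ) + 1)) horthB A).injective
        (by exact hcomp.trans zero_comp.symm)
    rw [hxg, hug, htotz, zero_comp]
  -- conclude: the cone of `c` is zero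
  obtain ⟨W, w, e, hW⟩ := Pretriangulated.distinguished_cocone_triangle c
  have hzW : IsZero W := by
    apply hgen
    intro K hK i f
    have h0 : e ≫ c⟦(1 : ℤ)⟧' = 0 := comp_distTriang_mor_zero₃₁ _ hW
    have h1 : f ≫ e = 0 := by
      apply shiftdown c keyB K hK i
      rw [Category.assoc, h0, comp_zero]
    obtain ⟨y, hy0⟩ := Triangle.coyoneda_exact₃ _ hW f h1
    have hy : f = y ≫ w := hy0
    obtain ⟨x, hx⟩ := keyA K hK i y
    have hcw : c ≫ w = 0 := comp_distTriang_mor_zero₁₂ _ hW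
    rw [hy, ← hx]
    exact (Category.assoc x c w).trans (by rw [hcw, comp_zero])
  exact (Triangle.isZero₃_iff_isIso₁ _ hW).1 hzW
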